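/- Let V be a finite nonempty subset of ℝ^n, P = conv(V), and c ∈ ℝ^n. Then there exists r > 0 such that for every c' ∈ ℝ^n with ‖c' − c‖₂ < r, every minimizer of c'ᵀx over P is also a minimizer of cᵀx over P. In other words, the set of optimal solutions of a linear program over a polytope is invariant (can only shrink) under all sufficiently small perturbations of the cost vector. -/

import Mathlib

open scoped RealInnerProductSpace

/-- the optimal solution set of a LP over a polytope is invariant
(can only shrink) under all sufficiently small perturbations of the cost vector. -/
theorem lp_optimal_set_stable_under_small_perturbation
    (n : ℕ) (V : Finset (EuclideanSpace ℝ (Fin n))) (hV : V.Nonempty)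
    (P : Set (EuclideanSpace ℝ (Fin n)))
    (hP : P = convexHull ℝ (V : Set (EuclideanSpace ℝ (Fin n))))
    (c : EuclideanSpace ℝ (Fin n)) :
    ∃ r > 0, ∀ c' : EuclideanSpace ℝ (Fin n), ‖c' - c‖ < r →
      ∀ y ∈ P, (∀ x ∈ P, ⟪c', y⟫ ≤ ⟪c', x⟫) → (∀ x ∈ P, ⟪c, y⟫ ≤ ⟪c, x⟫) := by
  classical
  set f : EuclideanSpace ℝ (Fin n) → ℝ := fun v => ⟪c, v⟫ with hf
  set m : ℝ := V.inf' hV f with hm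
  set D : ℝ := V.sup' hV (fun v => ‖v‖) with hD
  have hD0 : 0 ≤ D := by
    obtain ⟨v, hv⟩ := hV
    exact le_trans (norm_nonneg v) (Finset.le_sup' _ hv)
  set S : Finset (EuclideanSpace ℝ (Fin n)) := V.filter (fun v => m < f v) with hS
  set δ : ℝ := if hSne : S.Nonempty then S.inf' hSne (fun v => f v - m) else 1 with hδ
  have hδ0 : 0 < δ := by
    rw [hδ]
    split_ifs with hSne
    · rcases Finset.exists_mem_eq_inf' hSne (fun v => f v - m) with ⟨u, hu, hequ⟩
      rw [hequ]
      have := (Finset.mem_filter.mp hu).2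
      linarith
    · norm_num
  refine ⟨δ / (2 * (D + 1)), by positivity, ?_⟩
  intro c' hc' y hyP hymin
  -- lower bound on P: m ≤ ⟪c, x⟫ for all x ∈ P
  have hlin : IsLinearMap ℝ f := ⟨fun x y => inner_add_right c x y, fun a x => real_inner_smul_right c x a⟩
  have hlow : ∀ x ∈ P, m ≤ f x := by
    intro x hx
    rw [hP] at hx
    have : convexHull ℝ (V : Set (EuclideanSpace ℝ (Fin n))) ⊆ {w | m ≤ f w} := by
      apply convexHull_min
      · intro v hv
        exact Finset.inf'_le f hv
      · exact convex_halfSpace_ge hlin m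
    exact this hx
  -- representation of y as convex combination
  have hy' : y ∈ convexHull ℝ (V : Set (EuclideanSpace ℝ (Fin n))) := hP ▸ hyP
  rw [Finset.convexHull_eq] at hy'
  obtain ⟨w, hw0, hw1, hwc⟩ := hy'
  have hyc : y = ∑ v ∈ V, w v • v := by
    rw [← hwc, Finset.centerMass_eq_of_sum_1 _ _ hw1]
    simp
  -- c'-minimizer over V
  obtain ⟨v₀, hv₀V, hv₀min⟩ := V.exists_min_image (fun v => ⟪c', v⟫) hV
  have hv₀P : v₀ ∈ P := hP ▸ subset_convexHull ℝ _ hv₀V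
  have hyv₀ : ⟪c', y⟫ ≤ ⟪c', v₀⟫ := hymin v₀ hv₀P
  have hinner : ∀ d : EuclideanSpace ℝ (Fin n), ⟪d, y⟫ = ∑ v ∈ V, w v * ⟪d, v⟫ := by
    intro d
    rw [hyc, inner_sum]
    exact Finset.sum_congr rfl fun v _ => real_inner_smul_right d v (w v)
  -- support of w consists of c'-minimizers
  have hsupp : ∀ v ∈ V, 0 < w v → ⟪c', v⟫ = ⟪c', v₀⟫ := by
    intro v hvV hwv
    by_contra hne
    have hlt : ⟪c', v₀⟫ < ⟪c', v⟫ := lt_of_le_of_ne (hv₀min v hvV) (fun h => hne h.symm)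
    have hterm : 0 < w v * (⟪c', v⟫ - ⟪c', v₀⟫) := mul_pos hwv (by linarith)
    have hsum : ∑ u ∈ V, w u * (⟪c', u⟫ - ⟪c', v₀⟫) ≤ 0 := by
      have : ∑ u ∈ V, w u * (⟪c', u⟫ - ⟪c', v₀⟫) = ⟪c', y⟫ - ⟪c', v₀⟫ := by
        rw [hinner c']
        simp [mul_sub, Finset.sum_sub_distrib, ← Finset.sum_mul, hw1]
      linarith
    have hge : w v * (⟪c', v⟫ - ⟪c', v₀⟫) ≤ ∑ u ∈ V, w u * (⟪c', u⟫ - ⟪c', v₀⟫) := by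
      apply Finset.single_le_sum (fun u huV => ?_) hvV
      have := hv₀min u huV
      have := hw0 u huV
      nlinarith
    linarith
  -- every c'-minimizer over V achieves f = m
  have hkey : ∀ v ∈ V, (∀ u ∈ V, ⟪c', v⟫ ≤ ⟪c', u⟫) → f v = m := by
    intro v hvV hvmin
    by_contra hne
    have hmle : m ≤ f v := Finset.inf'_le f hvV
    have hmlt : m < f v := lt_of_le_of_ne hmle (fun h => hne h.symm)
    have hvS : v ∈ S := Finset.mem_filter.mpr ⟨hvV, hmlt⟩
    have hSne : S.Nonempty := ⟨v, hvS⟩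
    have hδle : δ ≤ f v - m := by
      rw [hδ, dif_pos hSne]
      exact Finset.inf'_le _ hvS
    obtain ⟨u, huV, hum⟩ := Finset.exists_mem_eq_inf' hV f
    have hperb : ∀ z ∈ V, |⟪c' - c, z⟫| ≤ (δ / (2 * (D + 1))) * D := by
      intro z hzV
      calc |⟪c' - c, z⟫| ≤ ‖c' - c‖ * ‖z‖ := abs_real_inner_le_norm _ _
        _ ≤ (δ / (2 * (D + 1))) * D := by
            apply mul_le_mul (le_of_lt hc') (Finset.le_sup' _ hzV) (norm_nonneg z)
            positivity
    have h1 : f v - (δ / (2 * (D + 1))) * D ≤ ⟪c', v⟫ := by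
      have h := hperb v hvV
      have : ⟪c', v⟫ = f v + ⟪c' - c, v⟫ := by
        rw [hf]; simp [inner_sub_left]
      rw [this]
      have := abs_le.mp h
      linarith
    have h2 : ⟪c', u⟫ ≤ m + (δ / (2 * (D + 1))) * D := by
      have h := hperb u huV
      have : ⟪c', u⟫ = f u + ⟪c' - c, u⟫ := by
        rw [hf]; simp [inner_sub_left]
      rw [this, ← hum]
      have := abs_le.mp h
      linarith
    have h3 : ⟪c', v⟫ ≤ ⟪c', u⟫ := hvmin u huV
    have hD1 : (0:ℝ) < D + 1 := by linarith
    have hmain : δ ≤ 2 * ((δ / (2 * (D + 1))) * D) := by linarith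
    have h5 : 2 * ((δ / (2 * (D + 1))) * D) * (D + 1) = δ * D := by
      field_simp
    nlinarith [mul_le_mul_of_nonneg_right hmain hD1.le]
  -- conclude ⟪c, y⟫ = m
  have hcy : ⟪c, y⟫ = m := by
    rw [hinner c]
    have : ∀ v ∈ V, w v * ⟪c, v⟫ = w v * m := by
      intro v hvV
      rcases eq_or_lt_of_le (hw0 v hvV) with h | h
      · rw [← h]; ring
      · have hfv : f v = m := hkey v hvV (fun u huV => by
          rw [hsupp v hvV h]; exact hv₀min u huV)
        rw [show (⟪c, v⟫:ℝ) = f v from rfl, hfv]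
    rw [Finset.sum_congr rfl this, ← Finset.sum_mul, hw1, one_mul]
  intro x hxP
  rw [hcy]
  exact hlow x hxP
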